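/- Let A ⊆ ℝⁿ be invex w.r.t. η satisfying Condition C. Then for all x, y ∈ A and t₁, t₂ ∈ [0,1], η(y + t₂ η(x,y), y + t₁ η(x,y)) = (t₂ - t₁) η(x,y). -/
import Mathlib


open Set

theorem condC_general
    (n : ℕ) (A : Set (Fin n → ℝ)) (η : (Fin n → ℝ) → (Fin n → ℝ) → (Fin n → ℝ))
    (hinv : ∀ x ∈ A, ∀ y ∈ A, ∀ t ∈ Icc (0:ℝ) 1, x + t • η y x ∈ A)
    (hC : ∀ x ∈ A, ∀ y ∈ A, ∀ t ∈ Icc (0:ℝ) 1,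
      η y (y + t • η x y) = (-t) • η x y ∧ η x (y + t • η x y) = (1 - t) • η x y) :
    ∀ x ∈ A, ∀ y ∈ A, ∀ t₁ ∈ Icc (0:ℝ) 1, ∀ t₂ ∈ Icc (0:ℝ) 1,
      η (y + t₂ • η x y) (y + t₁ • η x y) = (t₂ - t₁) • η x y := by
  intro x hx y hy t₁ ht₁ t₂ ht₂
  have hw₂ : y + t₂ • η x y ∈ A := hinv y hy x hx t₂ ht₂
  rcases le_or_gt t₁ t₂ with h | h
  · rcases eq_or_lt_of_le ht₂.1 with h0 | h0
    · -- t₂ = 0, hence t₁ = 0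
      have ht10 : t₁ = 0 := le_antisymm (h.trans h0.symm.le) ht₁.1
      subst ht10
      have := (hC x hx y hy 0 ⟨le_refl 0, zero_le_one⟩).1
      simp only [zero_smul, add_zero, neg_zero] at this ⊢
      rw [← h0]
      simpa using this
    · -- 0 < t₂, t₁ ≤ t₂
      set s : ℝ := (t₂ - t₁) / t₂ with hs_def
      have hst : s * t₂ = t₂ - t₁ := div_mul_cancel₀ _ (ne_of_gt h0)
      have hs : s ∈ Icc (0:ℝ) 1 := by
        constructor
        · exact div_nonneg (by linarith) h0.le
        · rw [div_le_one h0]; linarith [ht₁.1]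
      have hηy : η y (y + t₂ • η x y) = (-t₂) • η x y := (hC x hx y hy t₂ ht₂).1
      have key := (hC y hy (y + t₂ • η x y) hw₂ s hs).1
      rw [hηy] at key
      have heq : (y + t₂ • η x y) + s • ((-t₂) • η x y) = y + t₁ • η x y := by
        rw [smul_smul]
        have : s * -t₂ = t₁ - t₂ := by rw [mul_neg, hst]; ring
        rw [this]
        module
      rw [heq] at key
      rw [key, smul_smul]
      congr 1
      rw [neg_mul_neg, hst]
  · -- t₂ < t₁, so t₂ < 1
    have ht21 : t₂ < 1 := lt_of_lt_of_le h ht₁.2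
    set r : ℝ := (t₁ - t₂) / (1 - t₂) with hr_def
    have hrt : r * (1 - t₂) = t₁ - t₂ := div_mul_cancel₀ _ (by linarith)
    have hr : r ∈ Icc (0:ℝ) 1 := by
      constructor
      · exact div_nonneg (by linarith) (by linarith)
      · rw [div_le_one (by linarith)]; linarith [ht₁.2]
    have hηx : η x (y + t₂ • η x y) = (1 - t₂) • η x y := (hC x hx y hy t₂ ht₂).2
    have key := (hC x hx (y + t₂ • η x y) hw₂ r hr).1
    rw [hηx] at key
    have heq : (y + t₂ • η x y) + r • ((1 - t₂) • η x y) = y + t₁ • η x y := by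
      rw [smul_smul, hrt]
      module
    rw [heq] at key
    rw [key, smul_smul]
    congr 1
    rw [neg_mul, hrt]
    ring
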